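/- Let μ be tree-structured marginals on a finite product space realizable by some probability distribution, and x a fixed assignment with I(x;μ) > 0. Then for every q ∈ P(μ) with q(x_conditioning event) > 0, writing the coordinates as observed part x_o and hidden part x_h, the conditional probability satisfies q(x_h | x_o) ≥ I(x;μ) / (I(x;μ) + M), where M = max_{q'∈P(μ)} Σ_{z_h ≠ x_h} q'(z_h, x_o). -/

import Mathlib

open Finset

section Aux

set_option linter.unusedSectionVars false


variable {V : Type*} [Fintype V] [LinearOrder V] {G : SimpleGraph V} [DecidableRel G.Adj]

lemma parent_exists (hc : G.Connected) (r v : V) (hvr : v ≠ r) :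
    ∃ p, G.Adj v p ∧ G.dist p r < G.dist v r := by
  obtain ⟨w, hw⟩ := (hc v r).exists_walk_length_eq_dist
  cases w with
  | nil => exact absurd rfl hvr
  | cons h w' =>
      refine ⟨_, h, ?_⟩
      have h1 := SimpleGraph.dist_le w'
      simp [SimpleGraph.Walk.length_cons] at hw
      omega

lemma cardE_eq [DecidableEq V] :
    (univ.filter (fun e : V × V => e.1 < e.2 ∧ G.Adj e.1 e.2)).card = G.edgeFinset.card := by
  apply Finset.card_bij (fun e _ => Sym2.mk e.1 e.2)
  · rintro ⟨a, b⟩ he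
    simp only [mem_filter] at he
    simpa [SimpleGraph.mem_edgeFinset] using he.2.2
  · rintro ⟨a, b⟩ ha ⟨c, d⟩ hc h
    simp only [mem_filter] at ha hc
    rw [Sym2.mk_eq_mk_iff] at h
    rcases h with h | h
    · simpa using h
    · simp only [Prod.swap_prod_mk, Prod.mk.injEq] at h
      exact absurd (((ha.2.1.trans_eq h.2).trans hc.2.1).trans_eq h.1.symm) (lt_irrefl a)
  · intro e
    induction e using Sym2.ind with
    | _ a b =>
      intro he
      rw [SimpleGraph.mem_edgeFinset, SimpleGraph.mem_edgeSet] at he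
      rcases lt_or_gt_of_ne he.ne with h | h
      · exact ⟨(a, b), by simp [mem_filter, h, he], rfl⟩
      · exact ⟨(b, a), by simp [mem_filter, h, he.symm], Sym2.eq_swap⟩

lemma degree_split (i : V) :
    G.degree i = (univ.filter (fun j => i < j ∧ G.Adj i j)).card
      + (univ.filter (fun j => j < i ∧ G.Adj i j)).card := by
  classical
  rw [← SimpleGraph.card_neighborFinset_eq_degree, SimpleGraph.neighborFinset_eq_filter]
  rw [← Finset.card_union_of_disjoint]
  · congr 1
    ext j
    simp only [mem_union, mem_filter, mem_univ, true_and]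
    constructor
    · intro h
      rcases lt_trichotomy i j with hij | hij | hij
      · exact Or.inl ⟨hij, h⟩
      · exact absurd hij.symm h.ne'
      · exact Or.inr ⟨hij, h⟩
    · rintro (⟨_, h⟩ | ⟨_, h⟩) <;> exact h
  · rw [Finset.disjoint_left]
    intro j hj1 hj2
    simp only [mem_filter, mem_univ, true_and] at hj1 hj2
    exact absurd hj1.1 (not_lt.2 hj2.1.le)

lemma sum_deg (S : Finset V) [DecidableEq V] :
    ∑ i ∈ S, G.degree i
      = ∑ e ∈ univ.filter (fun e : V × V => e.1 < e.2 ∧ G.Adj e.1 e.2),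
          ((if e.1 ∈ S then 1 else 0) + (if e.2 ∈ S then 1 else 0)) := by
  rw [Finset.sum_filter, Fintype.sum_prod_type]
  have hsplit : ∀ (c : Prop) [Decidable c] (a b : ℕ),
      (if c then a + b else 0) = (if c then a else 0) + (if c then b else 0) := by
    intros c _ a b; split <;> simp
  simp only [hsplit, Finset.sum_add_distrib]
  have h1 : ∀ i : V, (∑ j, if i < j ∧ G.Adj i j then (if i ∈ S then 1 else 0) else 0)
      = if i ∈ S then (univ.filter (fun j => i < j ∧ G.Adj i j)).card else 0 := by
    intro i
    rw [Finset.card_filter]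
    by_cases hi : i ∈ S <;> simp [hi]
  have h2 : ∀ j : V, (∑ i, if i < j ∧ G.Adj i j then (if j ∈ S then 1 else 0) else 0)
      = if j ∈ S then (univ.filter (fun i => i < j ∧ G.Adj j i)).card else 0 := by
    intro j
    have hfe : (univ.filter (fun i => i < j ∧ G.Adj j i))
        = (univ.filter (fun i => i < j ∧ G.Adj i j)) := by
      ext k
      simp only [mem_filter, mem_univ, true_and, and_congr_right_iff]
      intro _
      exact G.adj_comm j k
    rw [hfe, Finset.card_filter]
    by_cases hj : j ∈ S <;> simp [hj]
  rw [Finset.sum_comm (f := fun i j => if i < j ∧ G.Adj i j then (if j ∈ S then 1 else 0) else 0)]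
  simp only [h1, h2, ← Finset.sum_add_distrib]
  have : ∀ i : V, ((if i ∈ S then (univ.filter (fun j => i < j ∧ G.Adj i j)).card else 0)
      + (if i ∈ S then (univ.filter (fun j => j < i ∧ G.Adj i j)).card else 0))
      = if i ∈ S then G.degree i else 0 := by
    intro i
    by_cases hi : i ∈ S <;> simp [hi, degree_split]
  simp only [this, Finset.sum_ite_mem, Finset.univ_inter]

lemma inj_bound [DecidableEq V] (hc : G.Connected) (S : Finset V) (hS : S ≠ univ) :
    S.card + ((univ.filter (fun e : V × V => e.1 < e.2 ∧ G.Adj e.1 e.2)).filter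
        (fun e => e.1 ∈ S ∧ e.2 ∈ S)).card
      ≤ ∑ e ∈ univ.filter (fun e : V × V => e.1 < e.2 ∧ G.Adj e.1 e.2),
          ((if e.1 ∈ S then 1 else 0) + (if e.2 ∈ S then 1 else 0)) := by
  have hex : ∃ r, r ∉ S := by
    by_contra h
    push_neg at h
    exact hS (Finset.eq_univ_iff_forall.2 h)
  obtain ⟨r, hr⟩ := hex
  have hpar : ∀ v : V, ∃ p, v ∈ S → G.Adj v p ∧ G.dist p r < G.dist v r := by
    intro v
    by_cases hv : v ∈ S
    · obtain ⟨p, hp⟩ := parent_exists hc r v (fun h => hr (h ▸ hv))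
      exact ⟨p, fun _ => hp⟩
    · exact ⟨v, fun h => absurd h hv⟩
  choose p hp using hpar
  set E := univ.filter (fun e : V × V => e.1 < e.2 ∧ G.Adj e.1 e.2) with hE
  set f : V → V × V := fun v => if v < p v then (v, p v) else (p v, v) with hf
  have hfE : ∀ v ∈ S, f v ∈ E := by
    intro v hv
    obtain ⟨hadj, _⟩ := hp v hv
    rcases lt_or_gt_of_ne (G.ne_of_adj hadj) with h | h
    · simp only [hf, if_pos h, hE, mem_filter, mem_univ, true_and]
      exact ⟨h, hadj⟩
    · simp only [hf, if_neg (not_lt.2 h.le), hE, mem_filter, mem_univ, true_and]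
      exact ⟨h, hadj.symm⟩
  have hfst : ∀ v, (f v).1 = v ∨ (f v).2 = v := by
    intro v
    simp only [hf]
    split <;> simp
  have hinj : Set.InjOn f S := by
    intro u hu v hv huv
    obtain ⟨hau, hdu⟩ := hp u hu
    obtain ⟨hav, hdv⟩ := hp v hv
    simp only [hf] at huv
    split_ifs at huv <;> rw [Prod.mk.injEq] at huv
    · exact huv.1
    · -- (u, p u) = (p v, v) : u = p v, p u = v
      exact absurd (huv.2 ▸ hdu) (not_lt.2 (huv.1 ▸ hdv).le)
    · exact absurd (huv.1 ▸ hdu) (not_lt.2 (huv.2 ▸ hdv).le)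
    · exact huv.2
  have hcard : (S.image f).card = S.card := Finset.card_image_of_injOn hinj
  have hsub : S.image f ⊆ E := by
    intro e he
    obtain ⟨v, hv, rfl⟩ := Finset.mem_image.1 he
    exact hfE v hv
  have hpt : ∀ e ∈ E, (if e.1 ∈ S ∧ e.2 ∈ S then 1 else 0) + (if e ∈ S.image f then 1 else 0)
      ≤ (if e.1 ∈ S then 1 else 0) + (if e.2 ∈ S then 1 else 0) := by
    intro e _
    have him : e ∈ S.image f → e.1 ∈ S ∨ e.2 ∈ S := by
      intro he
      obtain ⟨v, hv, rfl⟩ := Finset.mem_image.1 he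
      rcases hfst v with h | h
      · exact Or.inl (h.symm ▸ hv)
      · exact Or.inr (h.symm ▸ hv)
    by_cases h1 : e.1 ∈ S <;> by_cases h2 : e.2 ∈ S <;>
      by_cases h3 : e ∈ S.image f <;>
      simp [h1, h2, h3] <;> rcases him h3 with h | h <;> simp_all
  calc S.card + (E.filter (fun e => e.1 ∈ S ∧ e.2 ∈ S)).card
      = ∑ e ∈ E, ((if e.1 ∈ S ∧ e.2 ∈ S then 1 else 0) + (if e ∈ S.image f then 1 else 0)) := by
        rw [Finset.sum_add_distrib, ← Finset.card_filter, ← Finset.card_filter]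
        have hfilt : E.filter (· ∈ S.image f) = S.image f := by
          rw [Finset.filter_mem_eq_inter]
          exact Finset.inter_eq_right.2 hsub
        rw [hfilt, hcard, add_comm]
    _ ≤ _ := Finset.sum_le_sum hpt

lemma keyA [DecidableEq V] (hG : G.IsTree) (S : Finset V) :
    (∑ i ∈ S, (1 - (G.degree i : ℝ)))
      + (((univ.filter (fun e : V × V => e.1 < e.2 ∧ G.Adj e.1 e.2)).filter
          (fun e => e.1 ∈ S ∧ e.2 ∈ S)).card : ℝ)
      ≤ if S = univ then 1 else 0 := by
  have hsum : ∑ i ∈ S, (1 - (G.degree i : ℝ)) = (S.card : ℝ) - ((∑ i ∈ S, G.degree i : ℕ) : ℝ) := by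
    push_cast
    rw [Finset.sum_sub_distrib]
    simp
  by_cases hS : S = univ
  · subst hS
    rw [if_pos rfl, hsum]
    have h2 : (∑ i ∈ univ, G.degree i)
        = 2 * (univ.filter (fun e : V × V => e.1 < e.2 ∧ G.Adj e.1 e.2)).card := by
      rw [sum_deg univ]
      rw [Finset.card_filter]
      simp [two_mul, Finset.sum_add_distrib]
      omega
    have h3 : (univ.filter (fun e : V × V => e.1 < e.2 ∧ G.Adj e.1 e.2)).filter
        (fun e => e.1 ∈ univ ∧ e.2 ∈ univ)
        = univ.filter (fun e : V × V => e.1 < e.2 ∧ G.Adj e.1 e.2) := by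
      apply Finset.filter_true_of_mem
      intro e _
      simp
    have h4 : (univ.filter (fun e : V × V => e.1 < e.2 ∧ G.Adj e.1 e.2)).card + 1
        = Fintype.card V := by
      rw [cardE_eq]
      exact hG.card_edgeFinset
    rw [h2, h3]
    rw [Finset.card_univ]
    push_cast
    rw [← h4]
    push_cast
    ring_nf
    norm_num
  · rw [if_neg hS, hsum]
    have h5 := inj_bound hG.isConnected S hS
    rw [← sum_deg S] at h5
    have : (S.card : ℝ) + (((univ.filter (fun e : V × V => e.1 < e.2 ∧ G.Adj e.1 e.2)).filter
          (fun e => e.1 ∈ S ∧ e.2 ∈ S)).card : ℝ) ≤ ((∑ i ∈ S, G.degree i : ℕ) : ℝ) := by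
      exact_mod_cast h5
    linarith

lemma I_le_qx {n : ℕ} {X : Fin n → Type*} [∀ i, Fintype (X i)] [∀ i, DecidableEq (X i)]
    (G : SimpleGraph (Fin n)) [DecidableRel G.Adj] (hG : G.IsTree)
    (x : ∀ i, X i) (q : (∀ i, X i) → ℝ) (hq0 : ∀ z, 0 ≤ q z) :
    (∑ i, (1 - (G.degree i : ℝ)) * (∑ z, if z i = x i then q z else 0))
      + (∑ e ∈ univ.filter (fun e : Fin n × Fin n => e.1 < e.2 ∧ G.Adj e.1 e.2),
          (∑ z, if z e.1 = x e.1 ∧ z e.2 = x e.2 then q z else 0))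
      ≤ q x := by
  classical
  set E := univ.filter (fun e : Fin n × Fin n => e.1 < e.2 ∧ G.Adj e.1 e.2) with hE
  have step1 : (∑ i, (1 - (G.degree i : ℝ)) * (∑ z, if z i = x i then q z else 0))
      = ∑ z, ∑ i, (if z i = x i then (1 - (G.degree i : ℝ)) * q z else 0) := by
    simp only [Finset.mul_sum, mul_ite, mul_zero]
    exact Finset.sum_comm
  have step2 : (∑ e ∈ E, (∑ z, if z e.1 = x e.1 ∧ z e.2 = x e.2 then q z else 0))
      = ∑ z, ∑ e ∈ E, (if z e.1 = x e.1 ∧ z e.2 = x e.2 then q z else 0) :=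
    Finset.sum_comm
  rw [step1, step2, ← Finset.sum_add_distrib]
  have hpt : ∀ z : (∀ i, X i),
      (∑ i, (if z i = x i then (1 - (G.degree i : ℝ)) * q z else 0))
        + (∑ e ∈ E, (if z e.1 = x e.1 ∧ z e.2 = x e.2 then q z else 0))
      ≤ (if z = x then 1 else 0) * q z := by
    intro z
    set S : Finset (Fin n) := univ.filter (fun i => z i = x i) with hS
    have hA : (∑ i, (if z i = x i then (1 - (G.degree i : ℝ)) * q z else 0))
        = (∑ i ∈ S, (1 - (G.degree i : ℝ))) * q z := by
      rw [Finset.sum_mul, hS, Finset.sum_filter]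
    have hB : (∑ e ∈ E, (if z e.1 = x e.1 ∧ z e.2 = x e.2 then q z else 0))
        = ((E.filter (fun e => e.1 ∈ S ∧ e.2 ∈ S)).card : ℝ) * q z := by
      have hfe : E.filter (fun e => e.1 ∈ S ∧ e.2 ∈ S)
          = E.filter (fun e => z e.1 = x e.1 ∧ z e.2 = x e.2) := by
        apply Finset.filter_congr
        intro e _
        simp [hS]
      rw [hfe, ← Finset.sum_filter, Finset.sum_const, nsmul_eq_mul]
    have hiff : (S = univ) ↔ (z = x) := by
      rw [hS, Finset.filter_eq_self, funext_iff]
      simp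
    have hkey := keyA hG S
    rw [hA, hB, ← add_mul]
    have : (if S = univ then (1:ℝ) else 0) = (if z = x then 1 else 0) := by
      simp only [hiff]
    rw [← this]
    exact mul_le_mul_of_nonneg_right hkey (hq0 z)
  calc (∑ z, ((∑ i, (if z i = x i then (1 - (G.degree i : ℝ)) * q z else 0))
        + (∑ e ∈ E, (if z e.1 = x e.1 ∧ z e.2 = x e.2 then q z else 0))))
      ≤ ∑ z, (if z = x then 1 else 0) * q z := Finset.sum_le_sum (fun z _ => hpt z)
    _ = q x := by
        simp only [ite_mul, one_mul, zero_mul]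
        rw [Finset.sum_ite_eq' univ x q]
        simp


end Aux

/-- Robust conditional lower bound: if `I(x;μ) > 0` then for every `q ∈ P(μ)` with
positive conditioning mass, `q(x_h | x_o) ≥ I(x;μ) / (I(x;μ) + M)` where
`M = max_{q'∈P(μ)} Σ_{z_h ≠ x_h} q'(z_h, x_o)`. -/
theorem stmt7 {n : ℕ} {X : Fin n → Type*} [∀ i, Fintype (X i)] [∀ i, Nonempty (X i)]
    [∀ i, DecidableEq (X i)]
    (G : SimpleGraph (Fin n)) [DecidableRel G.Adj] (hG : G.IsTree)
    (H : Set (Fin n)) [DecidablePred (· ∈ H)]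
    (μ1 : ∀ i, X i → ℝ) (μ2 : ∀ i j, X i → X j → ℝ)
    (x : ∀ i, X i)
    -- the (positive-part-free) functional I(x;μ)
    (I : ℝ)
    (hIdef : I = (∑ i, (1 - (G.degree i : ℝ)) * μ1 i (x i))
      + (∑ e ∈ Finset.univ.filter (fun e : Fin n × Fin n => e.1 < e.2 ∧ G.Adj e.1 e.2),
          μ2 e.1 e.2 (x e.1) (x e.2)))
    (hI : 0 < I)
    -- membership predicate for P(μ)
    (Pμ : ((∀ i, X i) → ℝ) → Prop)
    (hPμ : ∀ p, Pμ p ↔ ((∀ z, 0 ≤ p z) ∧ (∑ z, p z = 1) ∧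
        (∀ i a, (∑ z, if z i = a then p z else 0) = μ1 i a) ∧
        (∀ i j, G.Adj i j → ∀ a b, (∑ z, if z i = a ∧ z j = b then p z else 0) = μ2 i j a b)))
    -- M is the maximum of Σ_{z_h ≠ x_h} q'(z_h, x_o) over q' ∈ P(μ)
    (M : ℝ)
    (hM : IsGreatest { s : ℝ | ∃ q', Pμ q' ∧
        s = ∑ z, if ((∀ i, i ∉ H → z i = x i) ∧ z ≠ x) then q' z else 0 } M)
    (q : (∀ i, X i) → ℝ) (hq : Pμ q)
    (hcond : 0 < ∑ z, if (∀ i, i ∉ H → z i = x i) then q z else 0) :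
    I / (I + M) ≤ q x / ∑ z, if (∀ i, i ∉ H → z i = x i) then q z else 0 := by
  
  classical
  obtain ⟨hq0, hq1, hqm1, hqm2⟩ := (hPμ q).1 hq
  -- I ≤ q x
  have hIle : I ≤ q x := by
    rw [hIdef]
    have h1 : (∑ i, (1 - (G.degree i : ℝ)) * μ1 i (x i))
        = ∑ i, (1 - (G.degree i : ℝ)) * (∑ z, if z i = x i then q z else 0) := by
      apply Finset.sum_congr rfl
      intro i _
      rw [hqm1]
    have h2 : (∑ e ∈ Finset.univ.filter (fun e : Fin n × Fin n => e.1 < e.2 ∧ G.Adj e.1 e.2),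
          μ2 e.1 e.2 (x e.1) (x e.2))
        = ∑ e ∈ Finset.univ.filter (fun e : Fin n × Fin n => e.1 < e.2 ∧ G.Adj e.1 e.2),
            (∑ z, if z e.1 = x e.1 ∧ z e.2 = x e.2 then q z else 0) := by
      apply Finset.sum_congr rfl
      intro e he
      simp only [Finset.mem_filter] at he
      rw [hqm2 e.1 e.2 he.2.2]
    rw [h1, h2]
    exact I_le_qx G hG x q hq0
  set T : ℝ := ∑ z, if ((∀ i, i ∉ H → z i = x i) ∧ z ≠ x) then q z else 0 with hT
  have hTM : T ≤ M := hM.2 ⟨q, hq, rfl⟩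
  have hT0 : 0 ≤ T := Finset.sum_nonneg (fun z _ => by split; exacts [hq0 z, le_rfl])
  have hsplit : (∑ z, if (∀ i, i ∉ H → z i = x i) then q z else 0) = q x + T := by
    have hpt : ∀ z : (∀ i, X i), (if (∀ i, i ∉ H → z i = x i) then q z else 0)
        = (if z = x then q z else 0) + (if ((∀ i, i ∉ H → z i = x i) ∧ z ≠ x) then q z else 0) := by
      intro z
      by_cases h1 : z = x
      · subst h1
        simp
      · by_cases h2 : (∀ i, i ∉ H → z i = x i) <;> simp [h1, h2]
    rw [Finset.sum_congr rfl (fun z _ => hpt z), Finset.sum_add_distrib]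
    congr 1
    rw [Finset.sum_ite_eq' Finset.univ x q]
    simp
  rw [hsplit] at hcond ⊢
  have hM0 : 0 ≤ M := le_trans hT0 hTM
  have hIM : 0 < I + M := by linarith
  rw [div_le_div_iff₀ hIM hcond]
  nlinarith [mul_le_mul_of_nonneg_right hIle hT0, mul_le_mul_of_nonneg_left hTM (le_trans hI.le hIle)]
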